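/- Let R = (√2 − 1)/(2 + √(7 − 2√2)). Then R is the unique positive root of (√2−1)r² + 4r + (1−√2) = 0 in (0,1), and for all r ∈ [0, R], 4r/(1−r²) ≤ √2 − 1. -/

import Mathlib

open Real Set

theorem F1_SL_radius_computation :
    let R : ℝ := (Real.sqrt 2 - 1) / (2 + Real.sqrt (7 - 2 * Real.sqrt 2))
    (0 < R ∧ R < 1) ∧
    (Real.sqrt 2 - 1) * R ^ 2 + 4 * R + (1 - Real.sqrt 2) = 0 ∧
    (∀ r ∈ Ioo (0 : ℝ) 1,
      (Real.sqrt 2 - 1) * r ^ 2 + 4 * r + (1 - Real.sqrt 2) = 0 → r = R) ∧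
    (∀ r ∈ Icc (0 : ℝ) R, 4 * r / (1 - r ^ 2) ≤ Real.sqrt 2 - 1) := by
  intro R
  set a := Real.sqrt 2 with ha_def
  set s := Real.sqrt (7 - 2 * Real.sqrt 2) with hs_def
  have ha2 : a ^ 2 = 2 := Real.sq_sqrt (by norm_num)
  have ha1 : 1 < a := by
    nlinarith [Real.sqrt_nonneg 2]
  have ha_lt : a < 3 / 2 := by nlinarith [Real.sqrt_nonneg 2]
  have hs0 : 0 ≤ s := Real.sqrt_nonneg _
  have hs2 : s ^ 2 = 7 - 2 * a := Real.sq_sqrt (by nlinarith)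
  have hs_gt : 2 < s := by nlinarith
  have hden : (0:ℝ) < 2 + s := by linarith
  have hR0 : 0 < R := div_pos (by linarith) hden
  have hR1 : R < 1 := by
    rw [div_lt_one hden]; linarith
  have hRroot : (a - 1) * R ^ 2 + 4 * R + (1 - a) = 0 := by
    have hR : R = (a - 1) / (2 + s) := rfl
    rw [hR]
    field_simp
    linear_combination (a - 1) * (ha2 - hs2)
  refine ⟨⟨hR0, hR1⟩, hRroot, ?_, ?_⟩
  · rintro r ⟨hr0, hr1⟩ hr
    have key : (r - R) * ((a - 1) * (r + R) + 4) = 0 := by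
      linear_combination hr - hRroot
    have hpos : (a - 1) * (r + R) + 4 > 0 := by nlinarith
    have := mul_eq_zero.mp key
    rcases this with h | h
    · linarith
    · linarith
  · rintro r ⟨hr0, hrR⟩
    have hr1 : r < 1 := lt_of_le_of_lt hrR hR1
    have h1r : 0 < 1 - r ^ 2 := by nlinarith
    rw [div_le_iff₀ h1r]
    nlinarith [hRroot, mul_nonneg (sub_nonneg.mpr hrR) (by nlinarith : (0:ℝ) ≤ (a - 1) * (r + R) + 4)]
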